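/- arXiv:1710.07127 — 2 statements merged into one kernel-verified Lean document; each statement's English description precedes it below -/
import Mathlib

section
/- For every nonnegative integer n and every complex number z, ∑_{k=0}^{n} C(2n+1,2k+1) · B_{2k+1}(3z) − ∑_{k=0}^{n} C(2n+1,2k) · B_{2k}(3z) = 2·∑_{k=0}^{n-1} 3^{2k} · C(2n+1,2k+1) · B_{2k+1}(z) + 3^{2n+1} · B_{2n+1}(z), where C(n,k) denotes the binomial coefficient. -/
open Finset

/-- The Bernoulli polynomial `B_n` evaluated at a complex number `z`,
with generating function `t·e^{zt}/(e^t−1) = ∑_{n≥0} B_n(z)·t^n/n!`. -/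
noncomputable def bernoulliPoly (n : ℕ) (z : ℂ) : ℂ :=
  Polynomial.aeval z (Polynomial.bernoulli n)

/-- The Euler polynomial `E_n` evaluated at a complex number `z`,
with generating function `2·e^{zt}/(e^t+1) = ∑_{n≥0} E_n(z)·t^n/n!`,
given by the explicit formula `E_n(z) = ∑_{k=0}^n 2^{-k} ∑_{j=0}^k (-1)^j C(k,j)(z+j)^n`. -/
noncomputable def eulerPoly (n : ℕ) (z : ℂ) : ℂ :=
  ∑ k ∈ range (n + 1), (1 / 2 ^ k : ℂ) *
    ∑ j ∈ range (k + 1), (-1) ^ j * (k.choose j : ℂ) * (z + j) ^ n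

-- explicit formula
lemma bp_def (N : ℕ) (w : ℂ) :
    bernoulliPoly N w = ∑ i ∈ range (N + 1),
      (algebraMap ℚ ℂ (bernoulli i)) * (N.choose i : ℂ) * w ^ (N - i) := by
  rw [bernoulliPoly, Polynomial.bernoulli, map_sum]
  refine Finset.sum_congr rfl fun i hi => ?_
  rw [Polynomial.aeval_monomial, map_mul]
  simp

lemma bp_add (m : ℕ) (x y : ℂ) :
    bernoulliPoly m (x + y)
      = ∑ j ∈ range (m + 1), (m.choose j : ℂ) * bernoulliPoly j x * y ^ (m - j) := by
  calc bernoulliPoly m (x + y)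
      = ∑ i ∈ range (m + 1), ∑ l ∈ range (m - i + 1),
          (algebraMap ℚ ℂ (bernoulli i)) * (m.choose i : ℂ) *
            (x ^ l * y ^ (m - i - l) * ((m - i).choose l : ℂ)) := by
        rw [bp_def]
        refine Finset.sum_congr rfl fun i _ => ?_
        rw [add_pow, Finset.mul_sum]
    _ = ∑ i ∈ range (m + 1), ∑ j ∈ Finset.Ico i (m + 1),
          (algebraMap ℚ ℂ (bernoulli i)) * (m.choose i : ℂ) *
            (x ^ (j - i) * y ^ (m - i - (j - i)) * ((m - i).choose (j - i) : ℂ)) := by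
        refine Finset.sum_congr rfl fun i hi => ?_
        rw [Finset.mem_range] at hi
        rw [Finset.sum_Ico_eq_sum_range]
        have h1 : m + 1 - i = m - i + 1 := by omega
        rw [h1]
        refine Finset.sum_congr rfl fun l _ => ?_
        have h2 : i + l - i = l := by omega
        rw [h2]
    _ = ∑ j ∈ range (m + 1), ∑ i ∈ range (j + 1),
          (algebraMap ℚ ℂ (bernoulli i)) * (m.choose i : ℂ) *
            (x ^ (j - i) * y ^ (m - i - (j - i)) * ((m - i).choose (j - i) : ℂ)) := by
        simp_rw [Finset.range_eq_Ico]
        rw [Finset.sum_Ico_Ico_comm]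
    _ = ∑ j ∈ range (m + 1), (m.choose j : ℂ) * bernoulliPoly j x * y ^ (m - j) := by
        refine Finset.sum_congr rfl fun j hj => ?_
        rw [Finset.mem_range] at hj
        rw [bp_def, Finset.mul_sum, Finset.sum_mul]
        refine Finset.sum_congr rfl fun i hi => ?_
        rw [Finset.mem_range] at hi
        have hij : i ≤ j := by omega
        have hjm : j ≤ m := by omega
        have hc : (m.choose j : ℂ) * (j.choose i : ℂ) = (m.choose i : ℂ) * ((m - i).choose (j - i) : ℂ) := by
          rw [← Nat.cast_mul, ← Nat.cast_mul, Nat.choose_mul hij]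
        have h2 : m - i - (j - i) = m - j := by omega
        rw [h2]
        calc (algebraMap ℚ ℂ) (bernoulli i) * ↑(m.choose i) *
              (x ^ (j - i) * y ^ (m - j) * ↑((m - i).choose (j - i)))
            = ((m.choose i : ℂ) * ((m - i).choose (j - i) : ℂ)) *
                ((algebraMap ℚ ℂ) (bernoulli i) * x ^ (j - i) * y ^ (m - j)) := by ring
          _ = _ := by rw [← hc]; ring

lemma sum_bp (m : ℕ) (x : ℂ) :
    ∑ j ∈ range (m + 1), ((m + 1).choose j : ℂ) * bernoulliPoly j x
      = (m + 1 : ℂ) * x ^ m := by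
  have h := congrArg (Polynomial.aeval x) (Polynomial.sum_bernoulli m)
  rw [map_sum, Polynomial.aeval_monomial] at h
  simp only [map_smul, Rat.smul_def, map_natCast (algebraMap ℚ ℂ)] at h
  calc ∑ j ∈ range (m + 1), ((m + 1).choose j : ℂ) * bernoulliPoly j x
      = ∑ k ∈ range (m + 1), ((m + 1).choose k : ℂ) * Polynomial.aeval x (Polynomial.bernoulli k) := rfl
    _ = algebraMap ℚ ℂ (m + 1) * x ^ m := h
    _ = (m + 1 : ℂ) * x ^ m := by push_cast; norm_num

lemma bp_diff (n : ℕ) (y : ℂ) :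
    bernoulliPoly (n + 1) (y + 1) = bernoulliPoly (n + 1) y + (n + 1 : ℂ) * y ^ n := by
  rw [bp_add, Finset.sum_range_succ, Nat.choose_self]
  simp only [one_pow, mul_one, Nat.sub_self, pow_zero, Nat.cast_one, one_mul]
  rw [sum_bp]
  ring

noncomputable def Bc (m : ℕ) : Polynomial ℂ := (Polynomial.bernoulli m).map (algebraMap ℚ ℂ)

lemma bp_eval (m : ℕ) (z : ℂ) : bernoulliPoly m z = (Bc m).eval z := by
  rw [bernoulliPoly, Polynomial.aeval_def, Polynomial.eval₂_eq_eval_map]; rfl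

lemma b'_eq (k : ℕ) : bernoulli' k = (-1 : ℚ) ^ k * bernoulli k := by
  rcases Nat.even_or_odd k with he | ho
  · rw [he.neg_one_pow, one_mul, bernoulli_eq_bernoulli'_of_ne_one]
    rintro rfl; exact (Nat.not_even_one) he
  · rw [ho.neg_one_pow]
    rcases eq_or_ne k 1 with rfl | hk
    · rw [bernoulli'_one, bernoulli_one]; norm_num
    · have h1 : 1 < k := by
        rcases ho with ⟨t, rfl⟩; omega
      rw [bernoulli'_eq_zero_of_odd ho h1, bernoulli_eq_bernoulli'_of_ne_one hk,
        bernoulli'_eq_zero_of_odd ho h1]; ring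

lemma reflect_poly (m : ℕ) : (Bc m).comp (1 - Polynomial.X) = (-1 : ℂ) ^ m • Bc m := by
  induction m with
  | zero => simp [Bc]
  | succ m ih =>
    set f : Polynomial ℂ := (Bc (m + 1)).comp (1 - Polynomial.X) - (-1 : ℂ) ^ (m + 1) • Bc (m + 1) with hf
    have hderiv : Polynomial.derivative (Bc (m + 1)) = ((m : ℂ) + 1) • Bc m := by
      rw [Bc, Polynomial.derivative_map, Polynomial.derivative_bernoulli_add_one]
      push_cast [Polynomial.map_mul, Polynomial.map_natCast, Polynomial.map_add, Polynomial.map_one]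
      rw [Polynomial.smul_eq_C_mul, Bc]
      simp only [map_add, Polynomial.C_eq_natCast, Polynomial.C_1]
    have hd : Polynomial.derivative f = 0 := by
      rw [hf, map_sub, Polynomial.derivative_comp, hderiv, Polynomial.derivative_smul, hderiv,
        Polynomial.smul_comp, ih]
      simp only [Polynomial.derivative_sub, Polynomial.derivative_one, Polynomial.derivative_X,
        zero_sub, smul_smul, Polynomial.smul_eq_C_mul, map_mul, map_pow, map_neg, map_one, map_add]
      ring
    have hc : f = Polynomial.C (f.coeff 0) := Polynomial.eq_C_of_derivative_eq_zero hd
    have hf0 : f.eval 0 = 0 := by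
      rw [hf]
      simp only [Polynomial.eval_sub, Polynomial.eval_comp, Polynomial.eval_one,
        Polynomial.eval_X, Polynomial.eval_smul, smul_eq_mul]
      have e1 : (Bc (m + 1)).eval 1 = algebraMap ℚ ℂ (bernoulli' (m + 1)) := by
        rw [Bc, Polynomial.eval_map, Polynomial.eval₂_at_one, Polynomial.bernoulli_eval_one]
      have e0 : (Bc (m + 1)).eval 0 = algebraMap ℚ ℂ (bernoulli (m + 1)) := by
        rw [Bc, Polynomial.eval_map, Polynomial.eval₂_at_zero, Polynomial.coeff_zero_eq_eval_zero, Polynomial.bernoulli_eval_zero]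
      rw [sub_zero, e1, e0, b'_eq]
      simp only [map_mul, map_pow, map_neg, map_one]
      ring
    have hz : f = 0 := by
      rw [hc, Polynomial.coeff_zero_eq_eval_zero, hf0, map_zero]
    have := sub_eq_zero.mp (hf ▸ hz)
    exact this

lemma bp_reflect (m : ℕ) (x : ℂ) :
    bernoulliPoly m (1 - x) = (-1 : ℂ) ^ m * bernoulliPoly m x := by
  have h := congrArg (Polynomial.eval x) (reflect_poly m)
  rw [Polynomial.eval_comp] at h
  simp only [Polynomial.eval_sub, Polynomial.eval_one, Polynomial.eval_X,
    Polynomial.eval_smul, smul_eq_mul] at h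
  rw [bp_eval, bp_eval, h]

lemma bp_zero (m : ℕ) : bernoulliPoly m 0 = algebraMap ℚ ℂ (bernoulli m) := by
  rw [bp_eval, Bc, Polynomial.eval_map, Polynomial.eval₂_at_zero,
    Polynomial.coeff_zero_eq_eval_zero, Polynomial.bernoulli_eval_zero]

lemma const_of_periodic (p : Polynomial ℂ) (h : ∀ x : ℂ, p.eval (x + 1) = p.eval x)
    (x : ℂ) : p.eval x = p.eval 0 := by
  have hnat : ∀ k : ℕ, p.eval (k : ℂ) = p.eval 0 := by
    intro k; induction k with
    | zero => norm_num
    | succ k ih => push_cast; rw [h]; exact ih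
  have hq : p - Polynomial.C (p.eval 0) = 0 := by
    apply Polynomial.eq_zero_of_infinite_isRoot
    apply Set.infinite_of_injective_forall_mem
      (f := fun k : ℕ => (k : ℂ)) Nat.cast_injective
    intro k
    simp only [Set.mem_setOf_eq, Polynomial.IsRoot, Polynomial.eval_sub, Polynomial.eval_C,
      hnat k, sub_self]
  have := congrArg (Polynomial.eval x) hq
  simpa [sub_eq_zero] using this

lemma mult3 (n : ℕ) (x : ℂ) :
    3 * bernoulliPoly (2 * n + 1) (3 * x - 1)
      = 3 ^ (2 * n + 1) * (bernoulliPoly (2 * n + 1) (x - 1/3) + bernoulliPoly (2 * n + 1) x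
          + bernoulliPoly (2 * n + 1) (x + 1/3)) := by
  set m := 2 * n + 1 with hm
  set p : Polynomial ℂ :=
    Polynomial.C 3 * (Bc m).comp (Polynomial.C 3 * Polynomial.X - 1)
      - Polynomial.C (3 ^ m) * ((Bc m).comp (Polynomial.X - Polynomial.C (1/3)) + Bc m
          + (Bc m).comp (Polynomial.X + Polynomial.C (1/3))) with hp
  have hev : ∀ y : ℂ, p.eval y = 3 * bernoulliPoly m (3 * y - 1)
      - 3 ^ m * (bernoulliPoly m (y - 1/3) + bernoulliPoly m y + bernoulliPoly m (y + 1/3)) := by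
    intro y
    simp only [hp, Polynomial.eval_sub, Polynomial.eval_add, Polynomial.eval_mul,
      Polynomial.eval_comp, Polynomial.eval_C, Polynomial.eval_X, Polynomial.eval_one,
      bp_eval]
  have hper : ∀ y : ℂ, p.eval (y + 1) = p.eval y := by
    intro y
    rw [hev, hev]
    have d := bp_diff (2 * n)
    have e1 : 3 * (y + 1) - 1 = ((3 * y - 1) + 1 + 1) + 1 := by ring
    have e2 : y + 1 - 1/3 = (y - 1/3) + 1 := by ring
    have e3 : y + 1 + 1/3 = (y + 1/3) + 1 := by ring
    rw [e1, e2, e3, d, d, d, d, d, d]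
    have P1 : ((3 : ℂ) * y - 1) ^ (2 * n) = 3 ^ (2 * n) * (y - 1/3) ^ (2 * n) := by
      rw [← mul_pow]; congr 1; ring
    have P2 : ((3 : ℂ) * y - 1 + 1) ^ (2 * n) = 3 ^ (2 * n) * y ^ (2 * n) := by
      rw [← mul_pow]; congr 1; ring
    have P3 : ((3 : ℂ) * y - 1 + 1 + 1) ^ (2 * n) = 3 ^ (2 * n) * (y + 1/3) ^ (2 * n) := by
      rw [← mul_pow]; congr 1; ring
    rw [P1, P2, P3]
    push_cast
    ring
  have hconst := const_of_periodic p hper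
  have h0 : p.eval 0 = 0 := by
    rw [hev]
    have d := bp_diff (2 * n)
    have hB1 : bernoulliPoly m 0 = bernoulliPoly m (-1) + ((2 * n : ℕ) + 1 : ℂ) * (-1) ^ (2 * n) := by
      have := d (-1); rw [show (-1 : ℂ) + 1 = 0 by ring] at this; exact this
    have hB2 : bernoulliPoly m (2/3 : ℂ)
        = bernoulliPoly m (-1/3) + ((2 * n : ℕ) + 1 : ℂ) * (-1/3) ^ (2 * n) := by
      have := d (-1/3 : ℂ); rw [show (-1/3 : ℂ) + 1 = 2/3 by ring] at this; exact this
    have hR : bernoulliPoly m (2/3 : ℂ) = - bernoulliPoly m (1/3 : ℂ) := by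
      have := bp_reflect m (1/3 : ℂ)
      rw [show (1 : ℂ) - 1/3 = 2/3 by ring] at this
      rw [this, hm, Odd.neg_one_pow ⟨n, by ring⟩]; ring
    have k1 : ((-1 : ℂ)) ^ (2 * n) = 1 := by rw [pow_mul]; norm_num
    have k2 : ((-1/3 : ℂ)) ^ (2 * n) = (1/3 : ℂ) ^ (2 * n) := by
      rw [pow_mul, pow_mul]; norm_num
    have k3 : (3 : ℂ) ^ (2 * n) * (1/3 : ℂ) ^ (2 * n) = 1 := by
      rw [← mul_pow]; norm_num
    have hu : (3 : ℂ) * bernoulliPoly m 0 = 3 ^ m * bernoulliPoly m 0 := by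
      rcases Nat.eq_zero_or_pos n with rfl | hn
      · norm_num [hm]
      · have hb : bernoulli m = 0 := by
          rw [bernoulli_eq_bernoulli'_of_ne_one (by omega)]
          exact bernoulli'_eq_zero_of_odd ⟨n, by ring⟩ (by omega)
        rw [bp_zero, hb, map_zero, mul_zero, mul_zero]
    rw [show (3 : ℂ) * 0 - 1 = -1 by ring, show (0 : ℂ) - 1/3 = -1/3 by ring,
      show (0 : ℂ) + 1/3 = 1/3 by ring]
    have hBm1 : bernoulliPoly m (-1)
        = bernoulliPoly m 0 - ((2 * n : ℕ) + 1 : ℂ) * (-1) ^ (2 * n) := by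
      rw [hB1]; ring
    have hBm13 : bernoulliPoly m (-1/3 : ℂ)
        = - bernoulliPoly m (1/3 : ℂ) - ((2 * n : ℕ) + 1 : ℂ) * (-1/3) ^ (2 * n) := by
      rw [← hR, hB2]; ring
    rw [hBm1, hBm13, k1, k2]
    rw [hm, pow_succ]
    push_cast
    linear_combination ((2*n : ℂ)+1) * 3 * k3 + hu
  have := hconst x
  rw [h0, hev] at this
  linear_combination this

lemma sum_range_even_odd (N : ℕ) (f : ℕ → ℂ) :
    ∑ j ∈ range (2 * N), f j = ∑ k ∈ range N, f (2 * k) + ∑ k ∈ range N, f (2 * k + 1) := by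
  induction N with
  | zero => simp
  | succ N ih =>
    have h2 : 2 * (N + 1) = (2 * N + 1) + 1 := by ring
    rw [h2, Finset.sum_range_succ, Finset.sum_range_succ, ih,
      Finset.sum_range_succ, Finset.sum_range_succ]
    ring

lemma negpow (n j : ℕ) (hj : j ≤ 2 * n + 1) :
    ((-1 : ℂ)) ^ (2 * n + 1 - j) = (-1) ^ (j + 1) := by
  have h : ((-1 : ℂ)) ^ (2 * n + 1) = (-1) ^ (2 * n + 1 - j) * (-1) ^ j := by
    rw [← pow_add]; congr 1; omega
  have hm : ((-1 : ℂ)) ^ (2 * n + 1) = -1 := Odd.neg_one_pow ⟨n, by ring⟩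
  have hsq : ((-1 : ℂ)) ^ j * (-1) ^ j = 1 := by
    rw [← pow_add]; exact Even.neg_one_pow ⟨j, rfl⟩
  calc ((-1 : ℂ)) ^ (2 * n + 1 - j)
      = (-1) ^ (2 * n + 1 - j) * ((-1) ^ j * (-1) ^ j) := by rw [hsq, mul_one]
    _ = ((-1 : ℂ)) ^ (2 * n + 1) * (-1) ^ j := by rw [h]; ring
    _ = (-1) ^ (j + 1) := by rw [hm]; ring

lemma pow_third (M j : ℕ) (hj : j ≤ M) : (3 : ℂ) ^ M * (1/3) ^ (M - j) = 3 ^ j := by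
  have h : (3 : ℂ) ^ M = 3 ^ (M - j) * 3 ^ j := by rw [← pow_add]; congr 1; omega
  calc (3 : ℂ) ^ M * (1/3) ^ (M - j) = ((3 : ℂ) * (1/3)) ^ (M - j) * 3 ^ j := by
        rw [h, mul_pow]; ring
    _ = 3 ^ j := by norm_num

theorem stmt11 (n : ℕ) (z : ℂ) :
    ∑ k ∈ range (n + 1), ((2 * n + 1).choose (2 * k + 1) : ℂ) *
        bernoulliPoly (2 * k + 1) (3 * z)
      - ∑ k ∈ range (n + 1), ((2 * n + 1).choose (2 * k) : ℂ) *
        bernoulliPoly (2 * k) (3 * z)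
      = 2 * ∑ k ∈ range n, (3 : ℂ) ^ (2 * k) *
          ((2 * n + 1).choose (2 * k + 1) : ℂ) * bernoulliPoly (2 * k + 1) z
        + 3 ^ (2 * n + 1) * bernoulliPoly (2 * n + 1) z := by
  have H1 : bernoulliPoly (2 * n + 1) (3 * z - 1)
      = ∑ k ∈ range (n + 1), ((2 * n + 1).choose (2 * k + 1) : ℂ) *
          bernoulliPoly (2 * k + 1) (3 * z)
        - ∑ k ∈ range (n + 1), ((2 * n + 1).choose (2 * k) : ℂ) *
          bernoulliPoly (2 * k) (3 * z) := by
    have h := bp_add (2 * n + 1) (3 * z) (-1)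
    rw [show (3 : ℂ) * z + -1 = 3 * z - 1 by ring] at h
    rw [h]
    have hc : ∑ j ∈ range (2 * n + 1 + 1), ((2 * n + 1).choose j : ℂ) *
          bernoulliPoly j (3 * z) * (-1) ^ (2 * n + 1 - j)
        = ∑ j ∈ range (2 * (n + 1)), ((2 * n + 1).choose j : ℂ) *
          bernoulliPoly j (3 * z) * (-1) ^ (j + 1) := by
      rw [show 2 * n + 1 + 1 = 2 * (n + 1) by ring]
      refine Finset.sum_congr rfl fun j hj => ?_
      rw [Finset.mem_range] at hj
      rw [negpow n j (by omega)]
    rw [hc, sum_range_even_odd]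
    have he : ∀ k ∈ range (n + 1), ((2 * n + 1).choose (2 * k) : ℂ) *
          bernoulliPoly (2 * k) (3 * z) * (-1) ^ (2 * k + 1)
        = -(((2 * n + 1).choose (2 * k) : ℂ) * bernoulliPoly (2 * k) (3 * z)) := by
      intro k _
      rw [pow_succ, pow_mul]; norm_num
    have ho : ∀ k ∈ range (n + 1), ((2 * n + 1).choose (2 * k + 1) : ℂ) *
          bernoulliPoly (2 * k + 1) (3 * z) * (-1) ^ (2 * k + 1 + 1)
        = ((2 * n + 1).choose (2 * k + 1) : ℂ) * bernoulliPoly (2 * k + 1) (3 * z) := by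
      intro k _
      rw [pow_succ, pow_succ, pow_mul]; norm_num
    rw [Finset.sum_congr rfl he, Finset.sum_congr rfl ho, Finset.sum_neg_distrib]
    ring
  have H2 := mult3 n z
  have hA : (3 : ℂ) ^ (2 * n + 1) * bernoulliPoly (2 * n + 1) (z + 1/3)
      = ∑ j ∈ range (2 * (n + 1)), ((2 * n + 1).choose j : ℂ) *
          bernoulliPoly j z * 3 ^ j := by
    rw [bp_add, Finset.mul_sum, show 2 * n + 1 + 1 = 2 * (n + 1) by ring]
    refine Finset.sum_congr rfl fun j hj => ?_
    rw [Finset.mem_range] at hj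
    calc (3 : ℂ) ^ (2 * n + 1) * (((2 * n + 1).choose j : ℂ) *
            bernoulliPoly j z * (1/3) ^ (2 * n + 1 - j))
        = ((2 * n + 1).choose j : ℂ) * bernoulliPoly j z *
            ((3 : ℂ) ^ (2 * n + 1) * (1/3) ^ (2 * n + 1 - j)) := by ring
      _ = _ := by rw [pow_third (2 * n + 1) j (by omega)]
  have hB : (3 : ℂ) ^ (2 * n + 1) * bernoulliPoly (2 * n + 1) (z - 1/3)
      = ∑ j ∈ range (2 * (n + 1)), ((2 * n + 1).choose j : ℂ) *
          bernoulliPoly j z * 3 ^ j * (-1) ^ (j + 1) := by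
    have h := bp_add (2 * n + 1) z (-(1/3))
    rw [show z + -(1/3) = z - 1/3 by ring] at h
    rw [h, Finset.mul_sum, show 2 * n + 1 + 1 = 2 * (n + 1) by ring]
    refine Finset.sum_congr rfl fun j hj => ?_
    rw [Finset.mem_range] at hj
    have hneg : (-(1/3) : ℂ) ^ (2 * n + 1 - j) = (-1) ^ (2 * n + 1 - j) * (1/3) ^ (2 * n + 1 - j) := by
      rw [← mul_pow]; norm_num
    rw [hneg, negpow n j (by omega)]
    calc (3 : ℂ) ^ (2 * n + 1) * (((2 * n + 1).choose j : ℂ) * bernoulliPoly j z *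
            ((-1) ^ (j + 1) * (1/3) ^ (2 * n + 1 - j)))
        = ((2 * n + 1).choose j : ℂ) * bernoulliPoly j z *
            ((3 : ℂ) ^ (2 * n + 1) * (1/3) ^ (2 * n + 1 - j)) * (-1) ^ (j + 1) := by ring
      _ = _ := by rw [pow_third (2 * n + 1) j (by omega)]
  have H3 : (3 : ℂ) ^ (2 * n + 1) * bernoulliPoly (2 * n + 1) (z + 1/3)
        + (3 : ℂ) ^ (2 * n + 1) * bernoulliPoly (2 * n + 1) (z - 1/3)
      = 2 * ∑ k ∈ range (n + 1), ((2 * n + 1).choose (2 * k + 1) : ℂ) *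
          bernoulliPoly (2 * k + 1) z * 3 ^ (2 * k + 1) := by
    rw [hA, hB, ← Finset.sum_add_distrib, sum_range_even_odd]
    have he : ∀ k ∈ range (n + 1), (((2 * n + 1).choose (2 * k) : ℂ) *
            bernoulliPoly (2 * k) z * 3 ^ (2 * k)
          + ((2 * n + 1).choose (2 * k) : ℂ) * bernoulliPoly (2 * k) z * 3 ^ (2 * k)
            * (-1) ^ (2 * k + 1)) = 0 := by
      intro k _
      rw [pow_succ, pow_mul]; norm_num
    have ho : ∀ k ∈ range (n + 1), (((2 * n + 1).choose (2 * k + 1) : ℂ) *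
            bernoulliPoly (2 * k + 1) z * 3 ^ (2 * k + 1)
          + ((2 * n + 1).choose (2 * k + 1) : ℂ) * bernoulliPoly (2 * k + 1) z * 3 ^ (2 * k + 1)
            * (-1) ^ (2 * k + 1 + 1))
        = 2 * (((2 * n + 1).choose (2 * k + 1) : ℂ) * bernoulliPoly (2 * k + 1) z * 3 ^ (2 * k + 1)) := by
      intro k _
      rw [pow_succ, pow_succ, pow_mul]; norm_num
      rw [show ((-1 : ℂ)) ^ (2 * k + 1) = -1 by rw [pow_succ, pow_mul]; norm_num]; ring
    rw [Finset.sum_congr rfl he, Finset.sum_congr rfl ho, Finset.sum_const, ← Finset.mul_sum]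
    simp
  have H4 : ∑ k ∈ range (n + 1), ((2 * n + 1).choose (2 * k + 1) : ℂ) *
        bernoulliPoly (2 * k + 1) z * 3 ^ (2 * k + 1)
      = 3 * ∑ k ∈ range n, (3 : ℂ) ^ (2 * k) *
          ((2 * n + 1).choose (2 * k + 1) : ℂ) * bernoulliPoly (2 * k + 1) z
        + 3 ^ (2 * n + 1) * bernoulliPoly (2 * n + 1) z := by
    rw [Finset.sum_range_succ, Nat.choose_self, Finset.mul_sum]
    have hc : ∀ k ∈ range n, ((2 * n + 1).choose (2 * k + 1) : ℂ) *
          bernoulliPoly (2 * k + 1) z * 3 ^ (2 * k + 1)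
        = 3 * ((3 : ℂ) ^ (2 * k) * ((2 * n + 1).choose (2 * k + 1) : ℂ) *
            bernoulliPoly (2 * k + 1) z) := by
      intro k _
      rw [pow_succ]; ring
    rw [Finset.sum_congr rfl hc]
    push_cast
    ring
  linear_combination (-1 : ℂ) * H1 + (1/3 : ℂ) * H2 + (1/3 : ℂ) * H3 + (2/3 : ℂ) * H4
end

section
/- For every positive integer n and every complex number z, ∑_{k=1}^{n} (-1)^k · 2^{2k+1} · k · C(4n,4k) · E_{4k-1}(z) = ∑_{k=1}^{n} (-1)^k · 2^{2k-1} · C(4n,4k-1) · B_{4k-1}(z) − ∑_{k=1}^{n} (-1)^k · 2^{2k-2} · C(4n,4k-3) · B_{4k-3}(z), where C(n,k) denotes the binomial coefficient. -/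
open Finset

open Polynomial

noncomputable def Bm (m : ℕ) : ℂ[X] := (Polynomial.bernoulli m).map (algebraMap ℚ ℂ)

lemma Bm_eval (m : ℕ) (z : ℂ) : (Bm m).eval z = bernoulliPoly m z := by
  simp [Bm, bernoulliPoly, Polynomial.aeval_def, Polynomial.eval_map]

noncomputable def EPc (n : ℕ) : ℂ[X] :=
  ∑ k ∈ range (n+1), C (1/2^k : ℂ) *
    ∑ j ∈ range (k+1), C ((-1:ℂ)^j * (k.choose j : ℂ)) * (X + C (j:ℂ))^n

lemma EPc_eval (n : ℕ) (z : ℂ) : (EPc n).eval z = eulerPoly n z := by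
  simp [EPc, eulerPoly, Polynomial.eval_finset_sum, mul_assoc]

lemma bern_diff (m : ℕ) (z : ℂ) :
    bernoulliPoly m (z + 1) = bernoulliPoly m z + m * z^(m-1) := by
  have hq : (Polynomial.bernoulli m).comp (X + 1)
      = Polynomial.bernoulli m + Polynomial.C (m:ℚ) * X^(m-1) := by
    apply Polynomial.funext
    intro x
    simp [Polynomial.eval_comp, add_comm x 1, Polynomial.bernoulli_eval_one_add]
  have := congrArg (Polynomial.aeval z) hq
  simp only [Polynomial.aeval_comp, map_add, map_mul, Polynomial.aeval_X,
    Polynomial.aeval_C, map_pow, map_one] at this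
  simpa [bernoulliPoly, map_natCast] using this

lemma per_eval_const (p : ℂ[X]) (h : ∀ w : ℂ, p.eval (w+1) = p.eval w) :
    ∀ w : ℂ, p.eval w = p.eval 0 := by
  have hn : ∀ k : ℕ, p.eval (k : ℂ) = p.eval 0 := by
    intro k
    induction k with
    | zero => simp
    | succ k ih => push_cast; rw [h (k:ℂ)]; exact ih
  have hq : p - C (p.eval 0) = 0 := by
    apply Polynomial.eq_zero_of_infinite_isRoot
    apply Set.Infinite.mono (s := Set.range ((↑) : ℕ → ℂ))
    · rintro x ⟨k, rfl⟩
      simp [Polynomial.IsRoot, hn k]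
    · exact Set.infinite_range_of_injective Nat.cast_injective
  have hp : p = C (p.eval 0) := sub_eq_zero.mp hq
  intro w
  rw [hp]; simp

lemma anti_eval_zero (p : ℂ[X]) (h : ∀ w : ℂ, p.eval w + p.eval (w+1) = 0) :
    ∀ w : ℂ, p.eval w = 0 := by
  have h2 : ∀ w : ℂ, p.eval (w + 2) = p.eval w := by
    intro w
    have a := h w; have b := h (w+1)
    have : p.eval (w+1+1) = p.eval w := by linear_combination b - a
    calc p.eval (w+2) = p.eval (w+1+1) := by ring_nf
      _ = p.eval w := this
  set q : ℂ[X] := p.comp (C 2 * X) with hq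
  have hper : ∀ w : ℂ, q.eval (w+1) = q.eval w := by
    intro w
    simp only [hq, Polynomial.eval_comp, Polynomial.eval_mul, Polynomial.eval_C,
      Polynomial.eval_X]
    rw [mul_add, mul_one, h2]
  have hconst := per_eval_const q hper
  have hpc : ∀ w : ℂ, p.eval w = p.eval 0 := by
    intro w
    have := hconst (w/2)
    simp only [hq, Polynomial.eval_comp, Polynomial.eval_mul, Polynomial.eval_C,
      Polynomial.eval_X, mul_zero] at this
    rw [mul_div_cancel₀] at this
    · exact this
    · norm_num
  intro w
  have h0 := h 0
  rw [hpc (0+1)] at h0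
  have hz : p.eval 0 = 0 := by linear_combination h0 / 2
  rw [hpc w, hz]

lemma pascal_alt (k : ℕ) (f : ℕ → ℂ) :
    ∑ j ∈ range (k+2), (-1:ℂ)^j * ((k+1).choose j : ℂ) * f j
      = ∑ j ∈ range (k+1), (-1:ℂ)^j * (k.choose j : ℂ) * (f j - f (j+1)) := by
  rw [Finset.sum_range_succ' (fun j => (-1:ℂ)^j * ((k+1).choose j : ℂ) * f j) (k+1)]
  have h1 : ∀ i, (-1:ℂ)^(i+1) * ((k+1).choose (i+1) : ℂ) * f (i+1)
      = -((-1:ℂ)^i * (k.choose i : ℂ) * f (i+1))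
        + (-1:ℂ)^(i+1) * (k.choose (i+1) : ℂ) * f (i+1) := by
    intro i
    rw [Nat.choose_succ_succ]
    push_cast
    ring
  have h2 : (∑ i ∈ range (k+1), (-1:ℂ)^(i+1) * (k.choose (i+1) : ℂ) * f (i+1)) + f 0
      = ∑ j ∈ range (k+1), (-1:ℂ)^j * (k.choose j : ℂ) * f j := by
    rw [Finset.sum_range_succ (fun i => (-1:ℂ)^(i+1) * (k.choose (i+1) : ℂ) * f (i+1)) k,
      Finset.sum_range_succ' (fun j => (-1:ℂ)^j * (k.choose j : ℂ) * f j) k]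
    simp [Nat.choose_succ_self]
  simp only [h1]
  rw [Finset.sum_add_distrib]
  simp only [pow_zero, Nat.choose_zero_right, Nat.cast_one, one_mul, mul_one]
  rw [add_assoc, h2, ← Finset.sum_add_distrib]
  refine Finset.sum_congr rfl fun j _ => ?_
  ring

lemma findiff : ∀ (k : ℕ) (p : ℂ[X]), p.degree < (k : ℕ) →
    ∑ j ∈ range (k+1), (-1:ℂ)^j * (k.choose j : ℂ) * p.eval (j : ℂ) = 0 := by
  intro k
  induction k with
  | zero =>
    intro p hp
    have hb : p.degree < 0 := by exact_mod_cast hp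
    simp [Polynomial.degree_eq_bot.mp (Nat.WithBot.lt_zero_iff.mp hb)]
  | succ k ih =>
    intro p hp
    rcases eq_or_ne p 0 with rfl | hp0
    · simp
    have key := pascal_alt k (fun j => p.eval (j : ℂ))
    rw [key]
    set q : ℂ[X] := p - p.comp (X + 1) with hqdef
    have hX1 : ((X : ℂ[X]) + 1).natDegree = 1 := by
      simpa using Polynomial.natDegree_X_add_C (1:ℂ)
    have hlc : (p.comp (X + 1)).leadingCoeff = p.leadingCoeff := by
      rw [Polynomial.leadingCoeff_comp (by rw [hX1]; norm_num)]
      have : ((X : ℂ[X]) + 1).leadingCoeff = 1 := by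
        simpa using Polynomial.leadingCoeff_X_add_C (1:ℂ)
      rw [this]; simp
    have hc0 : p.comp (X + 1) ≠ 0 := by
      intro h
      apply hp0
      rw [← Polynomial.leadingCoeff_eq_zero, ← hlc, h, Polynomial.leadingCoeff_zero]
    have hd : (p.comp (X + 1)).degree = p.degree := by
      rw [Polynomial.degree_eq_natDegree hp0, Polynomial.degree_eq_natDegree hc0,
        Polynomial.natDegree_comp, hX1, mul_one]
    have hdeg : q.degree < (k : ℕ) := by
      have h1 : q.degree < p.degree := Polynomial.degree_sub_lt hd.symm hp0 hlc.symm
      have h2 : p.degree ≤ (k : ℕ) := by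
        rw [Polynomial.degree_eq_natDegree hp0] at hp ⊢
        have : p.natDegree < k + 1 := by exact_mod_cast hp
        exact_mod_cast Nat.lt_succ_iff.mp this
      exact lt_of_lt_of_le h1 h2
    have hz := ih q hdeg
    rw [← hz]
    refine Finset.sum_congr rfl fun j _ => ?_
    simp [hqdef, Polynomial.eval_comp]

noncomputable def Dd (d k : ℕ) (w : ℂ) : ℂ :=
  ∑ j ∈ range (k+1), (-1:ℂ)^j * (k.choose j : ℂ) * (w + j) ^ d

lemma Dd_rec (d k : ℕ) (z : ℂ) : Dd d (k+1) z = Dd d k z - Dd d k (z+1) := by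
  have h := pascal_alt k (fun j => (z + j)^d)
  rw [Dd, Dd, Dd, ← Finset.sum_sub_distrib]
  rw [show k+1+1 = k+2 from rfl, h]
  refine Finset.sum_congr rfl fun j _ => ?_
  push_cast
  ring_nf

lemma Dd_top (d : ℕ) (z : ℂ) : Dd d (d+1) z = 0 := by
  have hdeg : ((X + C z : ℂ[X])^d).degree < ((d+1 : ℕ) : WithBot ℕ) := by
    have h1 : ((X + C z : ℂ[X])^d).degree ≤ (d : WithBot ℕ) := by
      calc ((X + C z : ℂ[X])^d).degree ≤ d • (X + C z : ℂ[X]).degree :=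
            Polynomial.degree_pow_le _ _
        _ ≤ (d : WithBot ℕ) := by rw [Polynomial.degree_X_add_C]; simp
    exact lt_of_le_of_lt h1 (by exact_mod_cast Nat.lt_succ_self d)
  have h := findiff (d+1) ((X + C z)^d) hdeg
  rw [Dd, ← h]
  refine Finset.sum_congr rfl fun j _ => ?_
  simp [add_comm]

lemma euler_eq_Dd (d : ℕ) (z : ℂ) :
    eulerPoly d z = ∑ k ∈ range (d+1), (1/2^k : ℂ) * Dd d k z := rfl

lemma euler_add_one (d : ℕ) (z : ℂ) :
    eulerPoly d z + eulerPoly d (z+1) = 2 * z^d := by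
  have hsum : eulerPoly d z + eulerPoly d (z+1)
      = ∑ k ∈ range (d+1),
          ((2 * (1/2^k : ℂ) * Dd d k z) - (2 * (1/2^(k+1) : ℂ) * Dd d (k+1) z)) := by
    rw [euler_eq_Dd, euler_eq_Dd, ← Finset.sum_add_distrib]
    refine Finset.sum_congr rfl fun k _ => ?_
    have h : Dd d k (z+1) = Dd d k z - Dd d (k+1) z := by rw [Dd_rec d k z]; ring
    rw [h]
    field_simp
    ring
  rw [hsum]
  rw [Finset.sum_range_sub' (fun k => 2 * (1/2^k : ℂ) * Dd d k z) (d+1)]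
  rw [Dd_top]
  simp [Dd]
lemma eulerA (s : ℕ) (z : ℂ) :
    ((s:ℂ)+1) * eulerPoly s z
      = 2^(s+1) * (bernoulliPoly (s+1) ((z+1)/2) - bernoulliPoly (s+1) (z/2)) := by
  set P : ℂ[X] := C ((s:ℂ)+1) * EPc s
      - C (2^(s+1) : ℂ) * ((Bm (s+1)).comp ((X + C 1) * C (1/2:ℂ))
        - (Bm (s+1)).comp (X * C (1/2:ℂ))) with hP
  have hev : ∀ w : ℂ, P.eval w = ((s:ℂ)+1) * eulerPoly s w
      - 2^(s+1) * (bernoulliPoly (s+1) ((w+1)/2) - bernoulliPoly (s+1) (w/2)) := by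
    intro w
    have h1 : ((w:ℂ) + 1) * (1/2) = (w+1)/2 := by ring
    have h2 : (w:ℂ) * (1/2) = w/2 := by ring
    simp only [hP, Polynomial.eval_sub, Polynomial.eval_mul, Polynomial.eval_C,
      Polynomial.eval_comp, Polynomial.eval_add, Polynomial.eval_X, Polynomial.eval_one,
      EPc_eval, h1, h2, Bm_eval]
  have hanti : ∀ w : ℂ, P.eval w + P.eval (w+1) = 0 := by
    intro w
    rw [hev w, hev (w+1)]
    have hE := euler_add_one s w
    have hB := bern_diff (s+1) (w/2)
    have harg : (w+1+1)/2 = w/2 + 1 := by ring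
    rw [harg, hB]
    simp only [Nat.add_sub_cancel]
    have hhalf : (2:ℂ)^(s+1) * (w/2)^(s) = 2 * w^s := by
      rw [div_pow]
      rw [pow_succ]
      field_simp
    push_cast
    linear_combination ((s:ℂ)+1) * hE - ((s:ℂ)+1) * hhalf
  have hz := anti_eval_zero P hanti z
  rw [hev z] at hz
  linear_combination hz
lemma bern_zero_val (m : ℕ) : bernoulliPoly m 0 = ((_root_.bernoulli m : ℚ) : ℂ) := by
  rw [← Bm_eval, Bm, Polynomial.eval_zero_map, Polynomial.bernoulli_eval_zero]
  simp

lemma bern_one_val (m : ℕ) : bernoulliPoly m 1 = ((bernoulli' m : ℚ) : ℂ) := by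
  rw [← Bm_eval, Bm, Polynomial.eval_one_map, Polynomial.bernoulli_eval_one]
  simp

lemma bern_reflect (m : ℕ) (z : ℂ) :
    bernoulliPoly m (1 - z) = (-1)^m * bernoulliPoly m z := by
  set R : ℂ[X] := (Bm m).comp (C 1 - X) - C ((-1:ℂ)^m) * Bm m with hR
  have hev : ∀ w : ℂ, R.eval w = bernoulliPoly m (1 - w) - (-1)^m * bernoulliPoly m w := by
    intro w
    simp [hR, Polynomial.eval_comp, Bm_eval]
  have hper : ∀ w : ℂ, R.eval (w+1) = R.eval w := by
    intro w
    rw [hev, hev]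
    have h1 : (1:ℂ) - (w+1) = -w := by ring
    have h2 : bernoulliPoly m (-w + 1) = bernoulliPoly m (-w) + m * (-w)^(m-1) :=
      bern_diff m (-w)
    have h3 : bernoulliPoly m (w + 1) = bernoulliPoly m w + m * w^(m-1) := bern_diff m w
    have h4 : (1:ℂ) - w = -w + 1 := by ring
    rw [h1, h4, h2, h3]
    rcases Nat.eq_zero_or_pos m with hm | hm
    · subst hm; simp
    · have : (-w : ℂ)^(m-1) = (-1)^(m-1) * w^(m-1) := by rw [neg_pow]
      rw [this]
      have hpow : ((-1:ℂ))^(m-1) = (-1)^m * (-1) := by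
        conv_rhs => rw [show m = (m-1)+1 by omega]
        rw [pow_succ]
        ring
      rw [hpow]
      ring
  have hconst := per_eval_const R hper
  have h0 : R.eval 0 = 0 := by
    rw [hev]
    simp only [sub_zero, mul_zero]
    rw [bern_one_val, bern_zero_val]
    rw [show _root_.bernoulli m = (-1)^m * bernoulli' m from rfl]
    have h5 : ((-1:ℂ))^m * (-1:ℂ)^m = 1 := by
      rw [← pow_add, ← two_mul, pow_mul]
      norm_num
    push_cast
    rw [← mul_assoc, h5, one_mul, sub_self]
  have := hconst z
  rw [h0, hev] at this
  linear_combination this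

lemma bern_mult (m : ℕ) (hodd : Odd m) (z : ℂ) :
    2 * bernoulliPoly m z
      = 2^m * (bernoulliPoly m (z/2) + bernoulliPoly m ((z+1)/2)) := by
  obtain ⟨t, rfl⟩ := hodd
  set m := 2*t+1 with hm
  set Q : ℂ[X] := C (2:ℂ) * Bm m
      - C ((2:ℂ)^m) * ((Bm m).comp (X * C (1/2:ℂ)) + (Bm m).comp ((X + C 1) * C (1/2:ℂ)))
    with hQ
  have hev : ∀ w : ℂ, Q.eval w = 2 * bernoulliPoly m w
      - 2^m * (bernoulliPoly m (w/2) + bernoulliPoly m ((w+1)/2)) := by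
    intro w
    have h1 : ((w:ℂ) + 1) * (1/2) = (w+1)/2 := by ring
    have h2 : (w:ℂ) * (1/2) = w/2 := by ring
    simp only [hQ, Polynomial.eval_sub, Polynomial.eval_mul, Polynomial.eval_C,
      Polynomial.eval_comp, Polynomial.eval_add, Polynomial.eval_X, Polynomial.eval_one,
      h1, h2, Bm_eval]
  have hper : ∀ w : ℂ, Q.eval (w+1) = Q.eval w := by
    intro w
    rw [hev, hev]
    have h3 := bern_diff m w
    have h4 := bern_diff m (w/2)
    have harg : (w+1+1)/2 = w/2 + 1 := by ring
    rw [harg, h3, h4]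
    have hs : m - 1 = 2*t := by omega
    rw [hs]
    have hhalf : (2:ℂ)^m * (w/2)^(2*t) = 2 * w^(2*t) := by
      rw [div_pow, hm, pow_succ, pow_mul, pow_mul]
      field_simp
    have hmc : (m:ℂ) = 2*t+1 := by rw [hm]; push_cast; ring
    push_cast
    linear_combination - hhalf * ((2*(t:ℂ))+1)
      + (1 - (1/2:ℂ)^(t*2)*2^(t*2)) * 2 * w^(t*2) * hmc
  have hconst := per_eval_const Q hper
  have hrefl : Q.eval 1 = - Q.eval 0 := by
    have hodd' : (-1:ℂ)^m = -1 := by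
      rw [hm, pow_succ, pow_mul]
      simp
    have r1 := bern_reflect m 0
    rw [hodd'] at r1
    norm_num at r1
    have r2 := bern_reflect m (1/2)
    rw [hodd'] at r2
    norm_num at r2
    have r2' : bernoulliPoly m (1/2) = 0 := by linear_combination r2/2
    rw [hev, hev]
    norm_num [r2']
    linear_combination (2 - (2:ℂ)^m) * r1
  have h10 : Q.eval 1 = Q.eval 0 := hconst 1
  have h00 : Q.eval 0 = 0 := by
    rw [h10] at hrefl
    linear_combination hrefl / 2
  have := hconst z
  rw [h00, hev] at this
  linear_combination this
lemma binom_deriv (N : ℕ) (x y : ℂ) :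
    ∑ m ∈ range (N+2), ((N+1).choose m : ℂ) * m * x^(m-1) * y^(N+1-m)
      = (N+1) * (x+y)^N := by
  rw [Finset.sum_range_succ'
    (fun m => ((N+1).choose m : ℂ) * m * x^(m-1) * y^(N+1-m)) (N+1)]
  simp only [Nat.cast_zero, mul_zero, zero_mul, add_zero]
  have hterm : ∀ t, (((N+1).choose (t+1) : ℕ) : ℂ) * ((t+1 : ℕ) : ℂ) * x^(t+1-1) * y^(N+1-(t+1))
      = ((N:ℂ)+1) * ((N.choose t : ℂ) * x^t * y^(N-t)) := by
    intro t
    have hna : (((N+1).choose (t+1) : ℕ) : ℂ) * ((t+1 : ℕ) : ℂ) = ((N:ℂ)+1) * (N.choose t) := by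
      have h := Nat.add_one_mul_choose_eq N t
      have hc : ((N.succ * N.choose t : ℕ) : ℂ) = ((N.succ.choose t.succ * t.succ : ℕ) : ℂ) := by
        exact congrArg (fun q : ℕ => (q : ℂ)) h
      push_cast at hc
      push_cast
      linear_combination - hc
    have h1 : t+1-1 = t := rfl
    have h2 : N+1-(t+1) = N-t := by omega
    rw [h1, h2, hna]
    ring
  rw [Finset.sum_congr rfl (fun t _ => hterm t), ← Finset.mul_sum]
  congr 1
  rw [add_pow x y N]
  refine Finset.sum_congr rfl fun t _ => ?_
  ring

lemma bern_expand (N : ℕ) (y : ℂ) :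
    bernoulliPoly N y
      = ∑ i ∈ range (N+1), ((_root_.bernoulli i : ℚ) : ℂ) * (N.choose i : ℂ) * y^(N-i) := by
  rw [bernoulliPoly, Polynomial.bernoulli, map_sum]
  refine Finset.sum_congr rfl fun i _ => ?_
  rw [Polynomial.aeval_monomial]
  simp only [eq_ratCast, Rat.cast_mul, Rat.cast_natCast]
  try ring

lemma bern_add (N : ℕ) (y x : ℂ) :
    bernoulliPoly N (x + y)
      = ∑ m ∈ range (N+1), (N.choose m : ℂ) * bernoulliPoly m x * y^(N-m) := by
  rcases N with _ | s
  · simp [bernoulliPoly]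
  set A : ℂ[X] := (Bm (s+1)).comp (X + C y)
      - ∑ m ∈ range (s+2), C ((((s+1).choose m : ℕ) : ℂ) * y^(s+1-m)) * Bm m with hA
  have hev : ∀ w : ℂ, A.eval w = bernoulliPoly (s+1) (w + y)
      - ∑ m ∈ range (s+2), (((s+1).choose m : ℕ) : ℂ) * bernoulliPoly m w * y^(s+1-m) := by
    intro w
    simp only [hA, Polynomial.eval_sub, Polynomial.eval_comp, Polynomial.eval_add,
      Polynomial.eval_X, Polynomial.eval_C, Polynomial.eval_finset_sum, Polynomial.eval_mul,
      Bm_eval]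
    congr 1
    refine Finset.sum_congr rfl fun m _ => ?_
    ring
  have hper : ∀ w : ℂ, A.eval (w+1) = A.eval w := by
    intro w
    rw [hev, hev]
    have h1 : w + 1 + y = (w + y) + 1 := by ring
    rw [h1, bern_diff (s+1) (w+y)]
    have h2 : ∀ m, (((s+1).choose m : ℕ) : ℂ) * bernoulliPoly m (w+1) * y^(s+1-m)
        = (((s+1).choose m : ℕ) : ℂ) * bernoulliPoly m w * y^(s+1-m)
          + (((s+1).choose m : ℕ) : ℂ) * m * w^(m-1) * y^(s+1-m) := by
      intro m
      rw [bern_diff m w]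
      ring
    rw [Finset.sum_congr rfl (fun m _ => h2 m), Finset.sum_add_distrib]
    have h3 := binom_deriv s w y
    rw [h3]
    have h4 : s + 1 - 1 = s := rfl
    rw [h4]
    push_cast
    ring
  have hconst := per_eval_const A hper
  have h0 : A.eval 0 = 0 := by
    rw [hev]
    rw [zero_add, bern_expand (s+1) y]
    rw [sub_eq_zero]
    refine Finset.sum_congr rfl fun m _ => ?_
    rw [bern_zero_val m]
    ring
  have hx := hconst x
  rw [h0, hev] at hx
  linear_combination hx
lemma Tclosed (M : ℕ) (c x : ℂ) (hc : c ≠ 0) :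
    ∑ m ∈ range (M+1), (M.choose m : ℂ) * c^m * bernoulliPoly m x
      = c^M * bernoulliPoly M (x + 1/c) := by
  rw [bern_add M (1/c) x, Finset.mul_sum]
  refine Finset.sum_congr rfl fun m hm => ?_
  have hm' : m ≤ M := Nat.lt_succ_iff.mp (Finset.mem_range.mp hm)
  have hpow : c^M * (1/c)^(M-m) = c^m := by
    rw [one_div, inv_pow, ← pow_sub₀ c hc (Nat.sub_le M m)]
    congr 1
    omega
  calc (M.choose m : ℂ) * c^m * bernoulliPoly m x
      = (M.choose m : ℂ) * bernoulliPoly m x * (c^M * (1/c)^(M-m)) := by rw [hpow]; ring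
    _ = c^M * ((M.choose m : ℂ) * bernoulliPoly m x * (1/c)^(M-m)) := by ring

lemma reindex4 (n : ℕ) (f : ℕ → ℂ) :
    ∑ m ∈ range (4*n+1), f m
      = f 0 + ∑ j ∈ range n, (f (4*j+1) + f (4*j+2) + f (4*j+3) + f (4*j+4)) := by
  induction n with
  | zero => simp
  | succ n ih =>
    have h : 4*(n+1)+1 = (4*n+1)+1+1+1+1 := by ring
    rw [h, Finset.sum_range_succ, Finset.sum_range_succ, Finset.sum_range_succ,
      Finset.sum_range_succ, ih, Finset.sum_range_succ]
    have e1 : 4*n+1+1+1 = 4*n+3 := by ring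
    have e2 : 4*n+1+1 = 4*n+2 := by ring
    have e3 : 4*n+1+1+1+1 = 4*n+4 := by ring
    rw [e1, e2, e3]
    ring
lemma bern_zeroth (x : ℂ) : bernoulliPoly 0 x = 1 := by
  simp [bernoulliPoly]

theorem stmt12 (n : ℕ) (hn : 0 < n) (z : ℂ) :
    ∑ k ∈ Icc 1 n, (-1 : ℂ) ^ k * 2 ^ (2 * k + 1) * (k : ℂ) *
        ((4 * n).choose (4 * k) : ℂ) * eulerPoly (4 * k - 1) z
      = ∑ k ∈ Icc 1 n, (-1 : ℂ) ^ k * 2 ^ (2 * k - 1) *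
          ((4 * n).choose (4 * k - 1) : ℂ) * bernoulliPoly (4 * k - 1) z
        - ∑ k ∈ Icc 1 n, (-1 : ℂ) ^ k * 2 ^ (2 * k - 2) *
          ((4 * n).choose (4 * k - 3) : ℂ) * bernoulliPoly (4 * k - 3) z := by
  classical
  set I : ℂ := Complex.I with hI
  -- numeric facts
  have h1ne : (2 + 2*I : ℂ) ≠ 0 := by simp [hI, Complex.ext_iff]
  have h2ne : (2 - 2*I : ℂ) ≠ 0 := by simp [hI, Complex.ext_iff]
  have h3ne : (-(2 + 2*I) : ℂ) ≠ 0 := neg_ne_zero.mpr h1ne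
  have h4ne : (-(2 - 2*I) : ℂ) ≠ 0 := neg_ne_zero.mpr h2ne
  have q14 : (2 + 2*I : ℂ)^4 = -64 := by norm_num [hI, Complex.ext_iff, pow_succ]
  have q24 : (2 - 2*I : ℂ)^4 = -64 := by norm_num [hI, Complex.ext_iff, pow_succ]
  have q34 : (-(2 + 2*I) : ℂ)^4 = -64 := by rw [Even.neg_pow (by decide)]; exact q14
  have q44 : (-(2 - 2*I) : ℂ)^4 = -64 := by rw [Even.neg_pow (by decide)]; exact q24
  have q12 : (2 + 2*I : ℂ)^2 = 8*I := by norm_num [hI, Complex.ext_iff, pow_succ]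
  have q22 : (2 - 2*I : ℂ)^2 = -(8*I) := by norm_num [hI, Complex.ext_iff, pow_succ]
  have q32 : (-(2 + 2*I) : ℂ)^2 = 8*I := by rw [Even.neg_pow (by decide)]; exact q12
  have q42 : (-(2 - 2*I) : ℂ)^2 = -(8*I) := by rw [Even.neg_pow (by decide)]; exact q22
  have q13 : (2 + 2*I : ℂ)^3 = -16 + 16*I := by norm_num [hI, Complex.ext_iff, pow_succ]
  have q23 : (2 - 2*I : ℂ)^3 = -16 - 16*I := by norm_num [hI, Complex.ext_iff, pow_succ]
  have q33 : (-(2 + 2*I) : ℂ)^3 = 16 - 16*I := by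
    rw [Odd.neg_pow (by decide : Odd 3), q13]; ring
  have q43 : (-(2 - 2*I) : ℂ)^3 = 16 + 16*I := by
    rw [Odd.neg_pow (by decide : Odd 3), q23]; ring
  -- the master function
  set g : ℕ → ℂ := fun m =>
    (-2) * (((4*n).choose m : ℂ) * (2 + 2*I)^m * bernoulliPoly m (z/2))
    + (-2) * (((4*n).choose m : ℂ) * (2 - 2*I)^m * bernoulliPoly m (z/2))
    + 2 * (((4*n).choose m : ℂ) * (-(2 + 2*I))^m * bernoulliPoly m ((z+1)/2))
    + 2 * (((4*n).choose m : ℂ) * (-(2 - 2*I))^m * bernoulliPoly m ((z+1)/2)) with hg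
  -- total sum is zero via closed forms
  have hgsum : ∑ m ∈ range (4*n+1), g m = 0 := by
    have e : ∑ m ∈ range (4*n+1), g m
        = (-2) * ∑ m ∈ range (4*n+1), (((4*n).choose m : ℂ) * (2 + 2*I)^m * bernoulliPoly m (z/2))
        + (-2) * ∑ m ∈ range (4*n+1), (((4*n).choose m : ℂ) * (2 - 2*I)^m * bernoulliPoly m (z/2))
        + 2 * ∑ m ∈ range (4*n+1), (((4*n).choose m : ℂ) * (-(2 + 2*I))^m * bernoulliPoly m ((z+1)/2))
        + 2 * ∑ m ∈ range (4*n+1), (((4*n).choose m : ℂ) * (-(2 - 2*I))^m * bernoulliPoly m ((z+1)/2)) := by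
      rw [Finset.mul_sum, Finset.mul_sum, Finset.mul_sum, Finset.mul_sum,
        ← Finset.sum_add_distrib, ← Finset.sum_add_distrib, ← Finset.sum_add_distrib]
    rw [e, Tclosed (4*n) _ _ h1ne, Tclosed (4*n) _ _ h2ne, Tclosed (4*n) _ _ h3ne,
      Tclosed (4*n) _ _ h4ne]
    have inv1 : (1:ℂ)/(2 + 2*I) = (1 - I)/4 := by
      rw [div_eq_div_iff h1ne (by norm_num : (4:ℂ) ≠ 0)]
      norm_num [hI, Complex.ext_iff]
    have inv2 : (1:ℂ)/(2 - 2*I) = (1 + I)/4 := by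
      rw [div_eq_div_iff h2ne (by norm_num : (4:ℂ) ≠ 0)]
      norm_num [hI, Complex.ext_iff]
    have inv3 : (1:ℂ)/(-(2 + 2*I)) = (I - 1)/4 := by
      rw [div_eq_div_iff h3ne (by norm_num : (4:ℂ) ≠ 0)]
      norm_num [hI, Complex.ext_iff]
    have inv4 : (1:ℂ)/(-(2 - 2*I)) = (-1 - I)/4 := by
      rw [div_eq_div_iff h4ne (by norm_num : (4:ℂ) ≠ 0)]
      norm_num [hI, Complex.ext_iff]
    have a1 : z/2 + 1/(2 + 2*I) = z/2 + (1 - I)/4 := by rw [inv1]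
    have a2 : z/2 + 1/(2 - 2*I) = z/2 + (1 + I)/4 := by rw [inv2]
    have a3 : (z+1)/2 + 1/(-(2 + 2*I)) = z/2 + (1 + I)/4 := by rw [inv3]; ring
    have a4 : (z+1)/2 + 1/(-(2 - 2*I)) = z/2 + (1 - I)/4 := by rw [inv4]; ring
    have p1 : (2 + 2*I)^(4*n) = ((-64:ℂ))^n := by rw [pow_mul, q14]
    have p2 : (2 - 2*I)^(4*n) = ((-64:ℂ))^n := by rw [pow_mul, q24]
    have p3 : (-(2 + 2*I))^(4*n) = ((-64:ℂ))^n := by rw [pow_mul, q34]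
    have p4 : (-(2 - 2*I))^(4*n) = ((-64:ℂ))^n := by rw [pow_mul, q44]
    rw [a1, a2, a3, a4, p1, p2, p3, p4]
    ring
  -- g 0 = 0
  have hg0 : g 0 = 0 := by
    simp [hg, bern_zeroth]
  -- group sums
  have hgroups : ∑ j ∈ range n, (g (4*j+1) + g (4*j+2) + g (4*j+3) + g (4*j+4)) = 0 := by
    have := reindex4 n g
    rw [hgsum, hg0] at this
    linear_combination - this
  -- power splitting
  have hcp : ∀ (c : ℂ), c^4 = -64 → ∀ (j r : ℕ), c^(4*j+r) = (-1)^j * 2^(6*j) * c^r := by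
    intro c h j r
    rw [pow_add, pow_mul, h]
    have : ((-64:ℂ))^j = (-1)^j * 2^(6*j) := by
      rw [show ((-64):ℂ) = -(2^6) by norm_num, neg_pow, ← pow_mul]
    rw [this]
  -- per-group identity
  have key : ∀ j : ℕ, g (4*j+1) + g (4*j+2) + g (4*j+3) + g (4*j+4)
      = 8 * ( (-1:ℂ)^(j+1) * 2^(2*j+3) * ((j:ℂ)+1) * ((4*n).choose (4*j+4) : ℂ)
                * eulerPoly (4*j+3) z
            - (-1:ℂ)^(j+1) * 2^(2*j+1) * ((4*n).choose (4*j+3) : ℂ)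
                * bernoulliPoly (4*j+3) z
            + (-1:ℂ)^(j+1) * 2^(2*j) * ((4*n).choose (4*j+1) : ℂ)
                * bernoulliPoly (4*j+1) z ) := by
    intro j
    have hE := eulerA (4*j+3) z
    push_cast at hE
    have hM3 := bern_mult (4*j+3) ⟨2*j+1, by ring⟩ z
    have hM1 := bern_mult (4*j+1) ⟨2*j, by ring⟩ z
    simp only [hg, hcp _ q14, hcp _ q24, hcp _ q34, hcp _ q44, q12, q22, q32, q42,
      q13, q23, q33, q43, q14, q24, q34, q44]
    linear_combination ((-1:ℂ)^j * 2^(2*j+4) * ((4*n).choose (4*j+4) : ℂ)) * hE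
      + ((-1:ℂ)^(j+1) * 2^(2*j+3) * ((4*n).choose (4*j+3) : ℂ)) * hM3
      + ((-1:ℂ)^j * 2^(2*j+2) * ((4*n).choose (4*j+1) : ℂ)) * hM1
  -- rewrite the three goal sums over range n
  have conv : ∀ (h : ℕ → ℂ), ∑ k ∈ Icc 1 n, h k = ∑ j ∈ range n, h (1+j) := by
    intro h
    rw [← Finset.Ico_add_one_right_eq_Icc, Finset.sum_Ico_eq_sum_range]
    simp
  rw [conv, conv, conv]
  have c1 : ∀ j : ℕ, (-1 : ℂ) ^ (1+j) * 2 ^ (2 * (1+j) + 1) * ((1+j : ℕ) : ℂ) *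
        ((4 * n).choose (4 * (1+j)) : ℂ) * eulerPoly (4 * (1+j) - 1) z
      = (-1:ℂ)^(j+1) * 2^(2*j+3) * ((j:ℂ)+1) * ((4*n).choose (4*j+4) : ℂ)
          * eulerPoly (4*j+3) z := by
    intro j
    have e1 : 4*(1+j) - 1 = 4*j+3 := by omega
    have e2 : 4*(1+j) = 4*j+4 := by ring
    have e3 : 2*(1+j)+1 = 2*j+3 := by ring
    have e4 : 1+j = j+1 := by ring
    rw [e1, e2, e3, e4]
    push_cast
    ring
  have c2 : ∀ j : ℕ, (-1 : ℂ) ^ (1+j) * 2 ^ (2 * (1+j) - 1) *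
        ((4 * n).choose (4 * (1+j) - 1) : ℂ) * bernoulliPoly (4 * (1+j) - 1) z
      = (-1:ℂ)^(j+1) * 2^(2*j+1) * ((4*n).choose (4*j+3) : ℂ)
          * bernoulliPoly (4*j+3) z := by
    intro j
    have e1 : 4*(1+j) - 1 = 4*j+3 := by omega
    have e3 : 2*(1+j) - 1 = 2*j+1 := by omega
    have e4 : 1+j = j+1 := by ring
    rw [e1, e3, e4]
  have c3 : ∀ j : ℕ, (-1 : ℂ) ^ (1+j) * 2 ^ (2 * (1+j) - 2) *
        ((4 * n).choose (4 * (1+j) - 3) : ℂ) * bernoulliPoly (4 * (1+j) - 3) z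
      = (-1:ℂ)^(j+1) * 2^(2*j) * ((4*n).choose (4*j+1) : ℂ)
          * bernoulliPoly (4*j+1) z := by
    intro j
    have e1 : 4*(1+j) - 3 = 4*j+1 := by omega
    have e3 : 2*(1+j) - 2 = 2*j := by omega
    have e4 : 1+j = j+1 := by ring
    rw [e1, e3, e4]
  rw [Finset.sum_congr rfl (fun j _ => c1 j), Finset.sum_congr rfl (fun j _ => c2 j),
    Finset.sum_congr rfl (fun j _ => c3 j)]
  -- finish
  have htot : ∑ j ∈ range n, (8:ℂ) * ( (-1:ℂ)^(j+1) * 2^(2*j+3) * ((j:ℂ)+1)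
        * ((4*n).choose (4*j+4) : ℂ) * eulerPoly (4*j+3) z
      - (-1:ℂ)^(j+1) * 2^(2*j+1) * ((4*n).choose (4*j+3) : ℂ) * bernoulliPoly (4*j+3) z
      + (-1:ℂ)^(j+1) * 2^(2*j) * ((4*n).choose (4*j+1) : ℂ) * bernoulliPoly (4*j+1) z )
      = 0 := by
    rw [← Finset.sum_congr rfl (fun j _ => key j)]
    exact hgroups
  rw [← Finset.mul_sum] at htot
  have hS : ∑ j ∈ range n, ( (-1:ℂ)^(j+1) * 2^(2*j+3) * ((j:ℂ)+1)
        * ((4*n).choose (4*j+4) : ℂ) * eulerPoly (4*j+3) z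
      - (-1:ℂ)^(j+1) * 2^(2*j+1) * ((4*n).choose (4*j+3) : ℂ) * bernoulliPoly (4*j+3) z
      + (-1:ℂ)^(j+1) * 2^(2*j) * ((4*n).choose (4*j+1) : ℂ) * bernoulliPoly (4*j+1) z )
      = 0 := by
    have h8 : (8:ℂ) ≠ 0 := by norm_num
    exact (mul_eq_zero.mp htot).resolve_left h8
  rw [Finset.sum_add_distrib, Finset.sum_sub_distrib] at hS
  linear_combination hS
end
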